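/- With notation as in the reduction of an S-complex at a matched pair (m(σ), σ): the maps π : C_*(S) → C_*(S̄) and ι : C_*(S̄) → C_*(S) are chain maps, i.e., π ∘ ∂ = ∂̄ ∘ π and ι ∘ ∂̄ = ∂ ∘ ι. -/

import Mathlib

/-- An `S`-complex over a ring `R`: a finite graded set with a coincidence index `κ`
raising dimension by one and whose induced boundary squares to zero. -/
structure SComplex (R S : Type*) [CommRing R] [Fintype S] [DecidableEq S] where
  dim : S → ℕ
  κ : S → S → R
  dim_rule : ∀ σ τ, κ σ τ ≠ 0 → dim σ = dim τ + 1
  dsq : ∀ σ ξ, ∑ τ, κ σ τ * κ τ ξ = 0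

/-- A partial matching `(A, B, C, m)` on an `S`-complex: a partition of `S` together
with a bijection `m : A → B` such that `κ(m τ, τ)` is invertible for `τ ∈ A`. -/
structure PartialMatching {R S : Type*} [CommRing R] [Fintype S] [DecidableEq S]
    (X : SComplex R S) where
  A : Set S
  B : Set S
  C : Set S
  m : S → S
  cover : A ∪ B ∪ C = Set.univ
  disjAB : Disjoint A B
  disjAC : Disjoint A C
  disjBC : Disjoint B C
  bij : Set.BijOn m A B
  unit : ∀ τ ∈ A, IsUnit (X.κ (m τ) τ)

/-- Acyclicity of a partial matching: there is no nontrivial sequence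
`σ₀, m σ₀, σ₁, m σ₁, …, σ_p, m σ_p, σ_{p+1} = σ₀` with `σ_{i+1} ≠ σ_i` and `σ_{i+1}`
a primary face of `m σ_i`. -/
def PartialMatching.Acyclic {R S : Type*} [CommRing R] [Fintype S] [DecidableEq S]
    {X : SComplex R S} (M : PartialMatching X) : Prop :=
  ¬ ∃ (p : ℕ) (σ : ℕ → S), (∀ i ≤ p, σ i ∈ M.A) ∧ σ (p + 1) = σ 0 ∧
      ∀ i ≤ p, σ (i + 1) ≠ σ i ∧ X.κ (M.m (σ i)) (σ (i + 1)) ≠ 0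

/-- The reduced coincidence index obtained by reduction of the pair `(m σ₀, σ₀)`:
`κ̄(η, ξ) = κ(η, ξ) − κ(η, σ₀)·κ(m σ₀, ξ)/κ(m σ₀, σ₀)`. -/
noncomputable def reducedKappa {R S : Type*} [CommRing R] [Fintype S] [DecidableEq S]
    (X : SComplex R S) (M : PartialMatching X) (σ₀ : S) : S → S → R :=
  fun η ξ => X.κ η ξ - X.κ η σ₀ * Ring.inverse (X.κ (M.m σ₀) σ₀) * X.κ (M.m σ₀) ξ

/-- The boundary operator induced by a coincidence index `κ` on chains (written in
coordinates): `(∂c)(ξ) = ∑_η c(η)·κ(η, ξ)`. -/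
noncomputable def bdryF {R S : Type*} [CommRing R] [Fintype S]
    (κ : S → S → R) (c : S → R) : S → R :=
  fun ξ => ∑ η, c η * κ η ξ

/-- The reduced coincidence index extended by zero on the removed pair `{σ₀, m σ₀}`,
modelling the coincidence index of the reduced complex `S̄ = S \ {σ₀, m σ₀}`. -/
noncomputable def reducedKappaZ {R S : Type*} [CommRing R] [Fintype S] [DecidableEq S]
    (X : SComplex R S) (M : PartialMatching X) (σ₀ : S) : S → S → R :=
  fun η ξ => if η = σ₀ ∨ η = M.m σ₀ ∨ ξ = σ₀ ∨ ξ = M.m σ₀ then 0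
    else reducedKappa X M σ₀ η ξ

/-- The projection `π : C_*(S) → C_*(S̄)`, determined on generators by
`π(m σ₀) = 0`, `π(σ₀) = −∑_{ξ ∈ S̄} (κ(m σ₀, ξ)/κ(m σ₀, σ₀))·ξ`, `π(τ) = τ` otherwise. -/
noncomputable def piMap {R S : Type*} [CommRing R] [Fintype S] [DecidableEq S]
    (X : SComplex R S) (M : PartialMatching X) (σ₀ : S) (c : S → R) : S → R :=
  fun ξ => if ξ = σ₀ ∨ ξ = M.m σ₀ then 0
    else c ξ - c σ₀ * (Ring.inverse (X.κ (M.m σ₀) σ₀) * X.κ (M.m σ₀) ξ)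

/-- The inclusion `ι : C_*(S̄) → C_*(S)`, determined on generators by
`ι(τ) = τ − (κ(τ, σ₀)/κ(m σ₀, σ₀))·(m σ₀)`. -/
noncomputable def iotaMap {R S : Type*} [CommRing R] [Fintype S] [DecidableEq S]
    (X : SComplex R S) (M : PartialMatching X) (σ₀ : S) (c : S → R) : S → R :=
  fun ξ => c ξ -
    (if ξ = M.m σ₀ then Ring.inverse (X.κ (M.m σ₀) σ₀) * ∑ τ, c τ * X.κ τ σ₀ else 0)

/-- The chain homotopy `D`, determined on generators by `D(σ₀) = (m σ₀)/κ(m σ₀, σ₀)`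
and `D(τ) = 0` for `τ ≠ σ₀`. -/
noncomputable def dMap {R S : Type*} [CommRing R] [Fintype S] [DecidableEq S]
    (X : SComplex R S) (M : PartialMatching X) (σ₀ : S) (c : S → R) : S → R :=
  fun ξ => if ξ = M.m σ₀ then Ring.inverse (X.κ (M.m σ₀) σ₀) * c σ₀ else 0

/-- `π` and `ι` are chain maps, i.e. `π ∘ ∂ = ∂̄ ∘ π` on `C_*(S)` and
`ι ∘ ∂̄ = ∂ ∘ ι` on `C_*(S̄)` (chains supported away from the removed pair). -/
theorem stmt7 {R S : Type*} [CommRing R] [IsDomain R] [IsPrincipalIdealRing R]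
    [Fintype S] [DecidableEq S] (X : SComplex R S) (M : PartialMatching X)
    {σ₀ : S} (hσ₀ : σ₀ ∈ M.A) :
    (∀ c : S → R,
        piMap X M σ₀ (bdryF X.κ c) = bdryF (reducedKappaZ X M σ₀) (piMap X M σ₀ c)) ∧
    (∀ c : S → R, c σ₀ = 0 → c (M.m σ₀) = 0 →
        iotaMap X M σ₀ (bdryF (reducedKappaZ X M σ₀) c) =
          bdryF X.κ (iotaMap X M σ₀ c)) := by
  set μ := M.m σ₀ with hμdef
  set u := Ring.inverse (X.κ μ σ₀) with hudef
  have hU : IsUnit (X.κ μ σ₀) := M.unit σ₀ hσ₀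
  have hui : u * X.κ μ σ₀ = 1 := Ring.inverse_mul_cancel _ hU
  have hk0 : X.κ μ σ₀ ≠ 0 := hU.ne_zero
  have hd : X.dim μ = X.dim σ₀ + 1 := X.dim_rule _ _ hk0
  have hμμ : X.κ μ μ = 0 := by
    by_contra h; have := X.dim_rule _ _ h; omega
  have hσσ : X.κ σ₀ σ₀ = 0 := by
    by_contra h; have := X.dim_rule _ _ h; omega
  have hσμ : X.κ σ₀ μ = 0 := by
    by_contra h; have := X.dim_rule _ _ h; omega
  have hne : σ₀ ≠ μ := by
    intro h
    have hB : μ ∈ M.B := M.bij.mapsTo hσ₀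
    exact (M.disjAB.ne_of_mem hσ₀ hB) h
  constructor
  · intro c
    funext ξ
    by_cases hξ : ξ = σ₀ ∨ ξ = μ
    · have h1 : piMap X M σ₀ (bdryF X.κ c) ξ = 0 := by
        simp [piMap, hξ, ← hμdef, ← hudef]
      have h2 : ∀ η, reducedKappaZ X M σ₀ η ξ = 0 := by
        intro η; simp [reducedKappaZ]; tauto
      simp [bdryF, h1, h2]
    · push_neg at hξ
      obtain ⟨hξ1, hξ2⟩ := hξ
      have hsummand : ∀ η, piMap X M σ₀ c η * reducedKappaZ X M σ₀ η ξ
          = (c η - c σ₀ * (u * X.κ μ η)) *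
            (X.κ η ξ - X.κ η σ₀ * u * X.κ μ ξ) := by
        intro η
        by_cases hη : η = σ₀ ∨ η = μ
        · have hz : piMap X M σ₀ c η = 0 := by simp [piMap, hη, ← hμdef, ← hudef]
          rw [hz, zero_mul]
          rcases hη with h | h
          · rw [h]
            have h3 : c σ₀ - c σ₀ * (u * X.κ μ σ₀) = 0 := by rw [hui]; ring
            rw [h3, zero_mul]
          · rw [h]
            have h3 : X.κ μ ξ - X.κ μ σ₀ * u * X.κ μ ξ = 0 := by
              have h4 : X.κ μ σ₀ * u = 1 := by rw [mul_comm]; exact hui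
              rw [h4]; ring
            rw [h3, mul_zero]
        · push_neg at hη
          simp only [piMap, reducedKappaZ, reducedKappa, ← hμdef, ← hudef, if_neg (not_or.mpr hη),
            if_neg (by tauto : ¬(η = σ₀ ∨ η = μ ∨ ξ = σ₀ ∨ ξ = μ))]
      have hexp : ∀ η, (c η - c σ₀ * (u * X.κ μ η)) *
            (X.κ η ξ - X.κ η σ₀ * u * X.κ μ ξ)
          = c η * X.κ η ξ - (c η * X.κ η σ₀) * (u * X.κ μ ξ)
            - (c σ₀ * u) * (X.κ μ η * X.κ η ξ)
            + (c σ₀ * u * (u * X.κ μ ξ)) * (X.κ μ η * X.κ η σ₀) := by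
        intro η; ring
      have hpi : piMap X M σ₀ (bdryF X.κ c) ξ
          = (∑ η, c η * X.κ η ξ) - (∑ η, c η * X.κ η σ₀) * (u * X.κ μ ξ) := by
        simp only [piMap, bdryF, ← hμdef, ← hudef, if_neg (not_or.mpr ⟨hξ1, hξ2⟩)]
      rw [hpi]
      show _ = ∑ η, piMap X M σ₀ c η * reducedKappaZ X M σ₀ η ξ
      simp only [hsummand, hexp, Finset.sum_add_distrib, Finset.sum_sub_distrib,
        ← Finset.mul_sum, ← Finset.sum_mul, X.dsq]
      ring
  · intro c hc0 hcμ
    funext ξ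
    have hbd : ∀ α, bdryF (reducedKappaZ X M σ₀) c α
        = if α = σ₀ ∨ α = μ then 0
          else ∑ η, c η * (X.κ η α - X.κ η σ₀ * u * X.κ μ α) := by
      intro α
      by_cases hα : α = σ₀ ∨ α = μ
      · have h2 : ∀ η, reducedKappaZ X M σ₀ η α = 0 := by
          intro η; simp [reducedKappaZ]; tauto
        simp [bdryF, h2, hα]
      · push_neg at hα
        rw [if_neg (not_or.mpr hα)]
        unfold bdryF
        apply Finset.sum_congr rfl
        intro η _
        by_cases hη : η = σ₀ ∨ η = μ
        · rcases hη with h | h <;> rw [h] <;> simp [hc0, hcμ]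
        · push_neg at hη
          simp only [reducedKappaZ, reducedKappa, ← hμdef, ← hudef,
            if_neg (by tauto : ¬(η = σ₀ ∨ η = μ ∨ α = σ₀ ∨ α = μ))]
    have hT : ∑ η, iotaMap X M σ₀ c η * X.κ η ξ
        = (∑ η, c η * X.κ η ξ) - (u * ∑ τ, c τ * X.κ τ σ₀) * X.κ μ ξ := by
      unfold iotaMap
      simp only [sub_mul, Finset.sum_sub_distrib, ite_mul, zero_mul]
      congr 1
      rw [Finset.sum_ite_eq' Finset.univ μ
        (fun η => Ring.inverse (X.κ (M.m σ₀) σ₀) * (∑ τ, c τ * X.κ τ σ₀) * X.κ η ξ)]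
      simp only [Finset.mem_univ, if_true]
      rfl
    show iotaMap X M σ₀ (bdryF (reducedKappaZ X M σ₀) c) ξ
        = ∑ η, iotaMap X M σ₀ c η * X.κ η ξ
    rw [hT]
    have hiota : iotaMap X M σ₀ (bdryF (reducedKappaZ X M σ₀) c) ξ
        = bdryF (reducedKappaZ X M σ₀) c ξ -
          (if ξ = μ then
            u * ∑ τ, bdryF (reducedKappaZ X M σ₀) c τ * X.κ τ σ₀ else 0) := by
      unfold iotaMap
      rw [← hμdef, ← hudef]
    rw [hiota, hbd ξ]
    by_cases hξσ : ξ = σ₀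
    · rw [hξσ]
      rw [if_pos (Or.inl rfl), if_neg hne]
      have h2 : X.κ μ σ₀ * u = 1 := by rw [mul_comm]; exact hui
      calc (0 : R) - 0
          = (∑ η, c η * X.κ η σ₀) - ((∑ τ, c τ * X.κ τ σ₀) * (X.κ μ σ₀ * u)) * 1 := by
            rw [h2]; ring
        _ = (∑ η, c η * X.κ η σ₀) - (u * ∑ τ, c τ * X.κ τ σ₀) * X.κ μ σ₀ := by ring
    · by_cases hξμ : ξ = μ
      · rw [hξμ]
        rw [if_pos (Or.inr rfl), if_pos rfl]
        have hzero : ∀ η,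
            (∑ τ, (X.κ η τ - X.κ η σ₀ * (u * X.κ μ τ)) * X.κ τ σ₀) = 0 := by
          intro η
          have h3 : ∀ τ, (X.κ η τ - X.κ η σ₀ * (u * X.κ μ τ)) * X.κ τ σ₀
              = X.κ η τ * X.κ τ σ₀ - (X.κ η σ₀ * u) * (X.κ μ τ * X.κ τ σ₀) := by
            intro τ; ring
          simp only [h3, Finset.sum_sub_distrib, ← Finset.mul_sum, X.dsq]
          ring
        have hsummand : ∀ τ, bdryF (reducedKappaZ X M σ₀) c τ * X.κ τ σ₀
            = (∑ η, c η * (X.κ η τ - X.κ η σ₀ * u * X.κ μ τ)) * X.κ τ σ₀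
              - (if τ = μ then (∑ η, c η * X.κ η μ) * X.κ μ σ₀ else 0) := by
          intro τ
          rw [hbd τ]
          by_cases hτ : τ = σ₀ ∨ τ = μ
          · rw [if_pos hτ]
            rcases hτ with h | h
            · rw [h, if_neg hne, hσσ]; ring
            · rw [h, if_pos rfl]
              have h4 : ∀ η, X.κ η μ - X.κ η σ₀ * u * X.κ μ μ = X.κ η μ := by
                intro η; rw [hμμ]; ring
              simp only [h4]; ring
          · rw [if_neg hτ, if_neg (by tauto : ¬ τ = μ)]
            ring
        have hsum0 : ∑ τ, (∑ η, c η * (X.κ η τ - X.κ η σ₀ * u * X.κ μ τ)) * X.κ τ σ₀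
            = 0 := by
          simp only [Finset.sum_mul]
          rw [Finset.sum_comm]
          apply Finset.sum_eq_zero
          intro η _
          simp only [mul_assoc, ← Finset.mul_sum]
          rw [hzero η, mul_zero]
        have hinner : ∑ τ, bdryF (reducedKappaZ X M σ₀) c τ * X.κ τ σ₀
            = -((∑ η, c η * X.κ η μ) * X.κ μ σ₀) := by
          simp only [hsummand, Finset.sum_sub_distrib, hsum0]
          rw [Finset.sum_ite_eq' Finset.univ μ
            (fun _ => (∑ η, c η * X.κ η μ) * X.κ μ σ₀)]
          simp
        rw [hinner, hμμ]
        have hfin : (0 : R) - u * -((∑ η, c η * X.κ η μ) * X.κ μ σ₀)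
            = ∑ η, c η * X.κ η μ := by
          calc (0 : R) - u * -((∑ η, c η * X.κ η μ) * X.κ μ σ₀)
              = (∑ η, c η * X.κ η μ) * (u * X.κ μ σ₀) := by ring
            _ = _ := by rw [hui]; ring
        rw [hfin]
        ring
      · rw [if_neg (not_or.mpr ⟨hξσ, hξμ⟩), if_neg hξμ]
        have h3 : ∀ η, c η * (X.κ η ξ - X.κ η σ₀ * u * X.κ μ ξ)
            = c η * X.κ η ξ - (c η * X.κ η σ₀) * (u * X.κ μ ξ) := by
          intro η; ring
        simp only [h3, Finset.sum_sub_distrib, ← Finset.sum_mul]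
        ring
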